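/- Let γ : [log 2, ∞) → (0,∞) be continuous, and define α by α⁻¹(x) := ∫_{log 2}^x dy / γ(y) for x ≥ log 2 (so α is the inverse of this strictly increasing function). Let (Ω, d, μ) be a metric probability space whose isoperimetric profile satisfies Ĩ(v) ≥ v γ(log 1/v) for all v ∈ (0, 1/2], where Ĩ(v) := min(I(v), I(1−v)). Then the log-concentration profile satisfies K(r) ≥ α(r) for all r ≥ 0, i.e. for every Borel set A with μ(A) ≥ 1/2 and every r > 0, 1 − μ(A_r) ≤ exp(−α(r)), where A_r is the open r-neighborhood of A. -/

import Mathlib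

open MeasureTheory Filter Set

/-- Minkowski (exterior) boundary measure of `A`:
`liminf_{ε→0+} (μ(A_ε) - μ(A))/ε`, with `A_ε` the open `ε`-neighborhood. -/
noncomputable def boundaryMeasure {Ω : Type*} [PseudoMetricSpace Ω]
    [MeasurableSpace Ω] (μ : Measure Ω) (A : Set Ω) : ℝ :=
  liminf (fun ε : ℝ =>
    ((μ (Metric.thickening ε A)).toReal - (μ A).toReal) / ε)
    (nhdsWithin 0 (Set.Ioi 0))


/-- From a liminf lower bound with eventual lower boundedness, extract an eventual bound. -/
lemma extract_liminf {f : ℝ → ℝ} {l : Filter ℝ} {L c : ℝ}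
    (hL : L ≤ Filter.liminf f l) (hc : c < L)
    (hbdd : ∃ b : ℝ, ∀ᶠ x in l, b ≤ f x) : ∀ᶠ x in l, c ≤ f x := by
  obtain ⟨b, hb⟩ := hbdd
  have : ∀ᶠ x in l, c < f x :=
    Filter.eventually_lt_of_lt_liminf (lt_of_lt_of_le hc hL) ⟨b, hb⟩
  exact this.mono fun x hx => hx.le

/-- Monotone function with right Dini rate ≥ 1 grows at least linearly. -/
lemma dini_mono {g : ℝ → ℝ} {a b : ℝ} (hab : a ≤ b)
    (hmono : MonotoneOn g (Set.Icc a b))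
    (hdini : ∀ s ∈ Set.Ico a b, ∀ c ∈ Set.Ioo (0:ℝ) 1,
      ∀ᶠ ε in nhdsWithin 0 (Set.Ioi 0), c * ε ≤ g (s + ε) - g s) :
    b - a ≤ g b - g a := by
  have key : ∀ c ∈ Set.Ioo (0:ℝ) 1, c * (b - a) ≤ g b - g a := by
    intro c hc
    set S : Set ℝ := {x | x ∈ Set.Icc a b ∧ c * (x - a) ≤ g x - g a} with hS
    have haS : a ∈ S := ⟨⟨le_refl a, hab⟩, by simp⟩
    have hSne : S.Nonempty := ⟨a, haS⟩
    have hSbdd : BddAbove S := ⟨b, fun x hx => hx.1.2⟩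
    set m := sSup S with hm
    have hma : a ≤ m := le_csSup hSbdd haS
    have hmb : m ≤ b := csSup_le hSne fun x hx => hx.1.2
    have hmS : m ∈ S := by
      refine ⟨⟨hma, hmb⟩, ?_⟩
      have h1 : ∀ x ∈ S, c * (x - a) ≤ g m - g a := by
        intro x hx
        have : g x ≤ g m := hmono hx.1 ⟨hma, hmb⟩ (le_csSup hSbdd hx)
        linarith [hx.2]
      -- c * (m - a) ≤ g m - g a since m = sSup S
      have h2 : m ≤ a + (g m - g a) / c := by
        apply csSup_le hSne
        intro x hx
        have h := h1 x hx
        have hc0 : (0:ℝ) < c := hc.1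
        have : x - a ≤ (g m - g a) / c := by
          rw [le_div_iff₀ hc0]; nlinarith
        linarith
      have hc0 : (0:ℝ) < c := hc.1
      calc c * (m - a) ≤ c * ((g m - g a) / c) := by
            apply mul_le_mul_of_nonneg_left _ hc0.le
            linarith
        _ = g m - g a := by field_simp
    rcases eq_or_lt_of_le hmb with heq | hlt
    · have := hmS.2; rw [heq] at this; exact this
    · exfalso
      have hdm := hdini m ⟨hma, hlt⟩ c hc
      have hev2 : ∀ᶠ ε in nhdsWithin (0:ℝ) (Set.Ioi 0), ε < b - m := by
        apply eventually_nhdsWithin_of_eventually_nhds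
        exact Filter.Tendsto.eventually_lt_const (by linarith) Filter.tendsto_id
      have hev3 : ∀ᶠ ε in nhdsWithin (0:ℝ) (Set.Ioi 0), ε ∈ Set.Ioi (0:ℝ) :=
        self_mem_nhdsWithin
      obtain ⟨ε, hh⟩ := ((hdm.and hev2).and hev3).exists
      obtain ⟨⟨h1, h2⟩, h3⟩ := hh
      have hxS : m + ε ∈ S := by
        constructor
        · constructor
          · linarith [Set.mem_Ioi.mp h3]
          · linarith
        · have := hmS.2
          have : c * (m + ε - a) = c * (m - a) + c * ε := by ring
          linarith [hmS.2, h1]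
      have : m + ε ≤ m := le_csSup hSbdd hxS
      have hε : (0:ℝ) < ε := h3
      linarith
  -- take c → 1
  by_contra hcon
  push_neg at hcon
  have hga : g a ≤ g b := hmono ⟨le_refl a, hab⟩ ⟨hab, le_refl b⟩ hab
  have hba : 0 < b - a := by
    rcases lt_or_ge 0 (b - a) with h | h
    · exact h
    · exfalso; linarith
  set c := (b - a + (g b - g a)) / (2 * (b - a)) with hcdef
  have hc1 : c ∈ Set.Ioo (0:ℝ) 1 := by
    constructor
    · apply div_pos (by linarith) (by linarith)
    · rw [div_lt_one (by linarith)]; linarith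
  have hk := key c hc1
  rw [hcdef, div_mul_eq_mul_div, div_le_iff₀ (by linarith : (0:ℝ) < 2*(b-a))] at hk
  nlinarith


lemma dini_step {Ψ hh : ℝ → ℝ} {s r L d : ℝ} (hsr : s < r)
    (hmono : Monotone hh) (hh1 : hh r < 1) (h0 : 0 ≤ hh s)
    (hL : 0 < L) (hd : HasDerivAt Ψ d (hh s)) (hdL : 1 ≤ d * L)
    (hΨ : ∀ v w, 0 ≤ v → v ≤ w → w < 1 → Ψ v ≤ Ψ w)
    (hΨs : ∀ v w, 0 ≤ v → v < w → w < 1 → Ψ v < Ψ w)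
    (hslope : ∀ c < L, ∀ᶠ ε in nhdsWithin (0:ℝ) (Set.Ioi 0), c * ε ≤ hh (s+ε) - hh s)
    {c : ℝ} (hc : c ∈ Set.Ioo (0:ℝ) 1) :
    ∀ᶠ ε in nhdsWithin (0:ℝ) (Set.Ioi 0), c * ε ≤ Ψ (hh (s+ε)) - Ψ (hh s) := by
  set v := hh s with hv
  have hv1 : v < 1 := lt_of_le_of_lt (hmono hsr.le) hh1
  set t := Real.sqrt c with ht
  have hc0 : (0:ℝ) < c := hc.1
  have ht0 : 0 < t := Real.sqrt_pos.mpr hc0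
  have ht1 : t < 1 := by
    rw [ht, show (1:ℝ) = Real.sqrt 1 by simp]
    exact Real.sqrt_lt_sqrt hc0.le hc.2
  have htt : t * t = c := Real.mul_self_sqrt hc0.le
  have hd0 : 0 < d := by nlinarith
  set κ := (1 - t) * d with hκ
  have hκ0 : 0 < κ := by nlinarith
  have hlo := (hasDerivAt_iff_isLittleO.mp hd).def hκ0
  rw [Metric.eventually_nhds_iff] at hlo
  obtain ⟨δ0, hδ0, hball⟩ := hlo
  set δ : ℝ := min (δ0 / 2) ((1 - v) / 2) with hδ
  have hδpos : 0 < δ := lt_min (by linarith) (by linarith)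
  have hvδ : v + δ < 1 := by
    have := min_le_right (δ0 / 2) ((1 - v) / 2)
    have : δ ≤ (1 - v) / 2 := this
    linarith
  set m := Ψ (v + δ) - Ψ v with hm
  have hm0 : 0 < m := by
    have := hΨs v (v + δ) h0 (by linarith) hvδ
    linarith
  have htL : t * L < L := by nlinarith
  have hev1 := hslope (t * L) htL
  have hev2 : ∀ᶠ ε in nhdsWithin (0:ℝ) (Set.Ioi 0), ε < r - s := by
    apply eventually_nhdsWithin_of_eventually_nhds
    exact Filter.Tendsto.eventually_lt_const (by linarith) Filter.tendsto_id
  have hev3 : ∀ᶠ ε in nhdsWithin (0:ℝ) (Set.Ioi 0), ε < m := by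
    apply eventually_nhdsWithin_of_eventually_nhds
    exact Filter.Tendsto.eventually_lt_const hm0 Filter.tendsto_id
  have hev4 : ∀ᶠ ε in nhdsWithin (0:ℝ) (Set.Ioi 0), ε ∈ Set.Ioi (0:ℝ) :=
    self_mem_nhdsWithin
  filter_upwards [hev1, hev2, hev3, hev4] with ε hsl hεr hεm hε0
  have hε0' : (0:ℝ) < ε := hε0
  set w := hh (s + ε) with hw
  have hwv : v ≤ w := hmono (by linarith)
  have hw1 : w < 1 := lt_of_le_of_lt (hmono (by linarith : s + ε ≤ r)) hh1
  rcases le_or_gt w (v + δ) with hcase | hcase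
  · -- close case: use derivative
    have hdist : dist w v < δ0 := by
      rw [Real.dist_eq, abs_of_nonneg (by linarith)]
      have : δ ≤ δ0 / 2 := min_le_left _ _
      linarith
    have hb := hball hdist
    rw [Real.norm_eq_abs, Real.norm_eq_abs] at hb
    have habs : |w - v| = w - v := abs_of_nonneg (by linarith)
    rw [habs] at hb
    have hb' : Ψ w - Ψ v - (w - v) * d ≥ -(κ * (w - v)) := by
      have := abs_le.mp hb
      have hsmul : (w - v) • d = (w - v) * d := rfl
      rw [hsmul] at this
      linarith [this.1]
    have hwv' : t * L * ε ≤ w - v := hsl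
    have : Ψ w - Ψ v ≥ t * d * (w - v) := by
      rw [hκ] at hb'; nlinarith
    have h2 : t * d * (w - v) ≥ t * d * (t * L * ε) := by
      apply mul_le_mul_of_nonneg_left hwv' (by positivity)
    have h3 : t * d * (t * L * ε) = (t * t) * (d * L) * ε := by ring
    have h4 : (t * t) * ε ≤ (t * t) * (d * L) * ε := by
      nlinarith [mul_nonneg (mul_nonneg (mul_pos ht0 ht0).le hε0'.le)
        (by linarith : (0:ℝ) ≤ d * L - 1)]
    have h5 : c * ε = (t * t) * ε := by rw [htt]
    linarith
  · -- jump case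
    have h2 : Ψ (v + δ) ≤ Ψ w := hΨ (v + δ) w (by linarith) hcase.le hw1
    have h3 : c * ε ≤ ε := mul_le_of_le_one_left hε0'.le hc.2.le
    linarith

/-- Isoperimetry implies concentration: if `Ĩ(v) ≥ v γ(log 1/v)` on `(0,1/2]`,
then `K(r) ≥ α(r)` where `α⁻¹(x) = ∫_{log 2}^x dy/γ(y)`; i.e. for every Borel
`A` with `μ(A) ≥ 1/2`, every `r > 0` and every `x ≥ log 2` with
`α⁻¹(x) ≤ r`, one has `1 - μ(A_r) ≤ exp(-x)`. -/
theorem stmt_14 {Ω : Type*} [MetricSpace Ω] [MeasurableSpace Ω] [BorelSpace Ω]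
    (μ : Measure Ω) [IsProbabilityMeasure μ]
    (γ : ℝ → ℝ) (hγpos : ∀ x ∈ Set.Ici (Real.log 2), 0 < γ x)
    (hγcont : ContinuousOn γ (Set.Ici (Real.log 2)))
    (hiso : ∀ A : Set Ω, MeasurableSet A →
      ∀ v ∈ Set.Ioc (0 : ℝ) (1 / 2),
        ((μ A).toReal = v ∨ (μ A).toReal = 1 - v) →
        v * γ (Real.log (1 / v)) ≤ boundaryMeasure μ A) :
    ∀ A : Set Ω, MeasurableSet A → 1 / 2 ≤ (μ A).toReal →
      ∀ r > (0 : ℝ), ∀ x ∈ Set.Ici (Real.log 2),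
        (∫ y in (Real.log 2)..x, 1 / γ y) ≤ r →
        1 - (μ (Metric.thickening r A)).toReal ≤ Real.exp (-x) := by
  intro A hA hA2 r hr x hx hTx
  set h : ℝ → ℝ := fun s => (μ (Metric.thickening s A)).toReal with hhdef
  have hmono : Monotone h := by
    intro s t hst
    exact ENNReal.toReal_mono (measure_ne_top μ _)
      (measure_mono (Metric.thickening_mono hst A))
  have hle1 : ∀ s, h s ≤ 1 := by
    intro s
    have h1 : μ (Metric.thickening s A) ≤ 1 := prob_le_one
    simpa using ENNReal.toReal_mono ENNReal.one_ne_top h1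
  have hhalf : ∀ s, 0 < s → 1 / 2 ≤ h s := by
    intro s hs
    refine le_trans hA2 (ENNReal.toReal_mono (measure_ne_top μ _) ?_)
    exact measure_mono (Metric.self_subset_thickening hs A)
  have h0 : ∀ s, 0 ≤ h s := fun s => ENNReal.toReal_nonneg
  by_cases hr1 : h r < 1
  swap
  · push_neg at hr1
    have : 1 - h r ≤ 0 := by linarith
    exact this.trans (Real.exp_pos _).le
  -- extended gamma
  set γ' : ℝ → ℝ := fun y => γ (max y (Real.log 2)) with hγ'def
  have hγ'pos : ∀ y, 0 < γ' y := fun y => hγpos _ (Set.mem_Ici.mpr (le_max_right _ _))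
  have hγ'cont : Continuous γ' :=
    hγcont.comp_continuous (continuous_id.max continuous_const)
      (fun y => Set.mem_Ici.mpr (le_max_right _ _))
  have hγ'eq : ∀ y, Real.log 2 ≤ y → γ' y = γ y := by
    intro y hy; simp only [hγ'def]; rw [max_eq_left hy]
  set f0 : ℝ → ℝ := fun y => 1 / γ' y with hf0def
  have hf0cont : Continuous f0 := continuous_const.div hγ'cont (fun y => (hγ'pos y).ne')
  have hf0pos : ∀ y, 0 < f0 y := fun y => one_div_pos.mpr (hγ'pos y)
  set T : ℝ → ℝ := fun z => ∫ y in (Real.log 2)..z, f0 y with hTdef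
  have hTderiv : ∀ z, HasDerivAt T (f0 z) z := by
    intro z
    exact intervalIntegral.integral_hasDerivAt_right
      (hf0cont.intervalIntegrable _ _)
      (hf0cont.stronglyMeasurable.stronglyMeasurableAtFilter)
      hf0cont.continuousAt
  have hTsm : StrictMono T := by
    apply strictMono_of_deriv_pos
    intro z; rw [(hTderiv z).deriv]; exact hf0pos z
  have hT2 : T (Real.log 2) = 0 := intervalIntegral.integral_same
  have hTeq : T x = ∫ y in (Real.log 2)..x, 1 / γ y := by
    apply intervalIntegral.integral_congr
    intro y hy
    rw [Set.uIcc_of_le hx] at hy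
    simp only [hf0def]
    rw [hγ'eq y hy.1]
  -- Psi
  set Ψ : ℝ → ℝ := fun w => T (-Real.log (1 - w)) with hΨdef
  have hΨmono : ∀ v w, 0 ≤ v → v ≤ w → w < 1 → Ψ v ≤ Ψ w := by
    intro v w hv hvw hw1
    apply hTsm.monotone
    have h1 : (0:ℝ) < 1 - w := by linarith
    have := Real.log_le_log h1 (by linarith : 1 - w ≤ 1 - v)
    linarith
  have hΨs : ∀ v w, 0 ≤ v → v < w → w < 1 → Ψ v < Ψ w := by
    intro v w hv hvw hw1
    apply hTsm
    have h1 : (0:ℝ) < 1 - w := by linarith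
    have := Real.log_lt_log h1 (by linarith : 1 - w < 1 - v)
    linarith
  -- log bound: for 1/2 ≤ v < 1, -log(1-v) ≥ log 2
  have hlogb : ∀ v : ℝ, 1 / 2 ≤ v → v < 1 → Real.log 2 ≤ -Real.log (1 - v) := by
    intro v hv hv1
    have h1 : (0:ℝ) < 1 - v := by linarith
    have h2 : Real.log (1 - v) ≤ Real.log (1/2) := Real.log_le_log h1 (by linarith)
    rw [Real.log_div one_ne_zero two_ne_zero, Real.log_one] at h2
    linarith
  -- derivative of Ψ at points v ∈ [1/2, 1)
  have hΨderiv : ∀ v : ℝ, v < 1 →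
      HasDerivAt Ψ (f0 (-Real.log (1 - v)) * (1 / (1 - v))) v := by
    intro v hv1
    have h1 : (0:ℝ) < 1 - v := by linarith
    have hinner : HasDerivAt (fun w : ℝ => -Real.log (1 - w)) (1 / (1 - v)) v := by
      have ha : HasDerivAt (fun w : ℝ => 1 - w) (-1) v := by
        simpa using (hasDerivAt_id v).const_sub 1
      have hb := (Real.hasDerivAt_log h1.ne').comp v ha
      have := hb.neg
      rw [show (1:ℝ) / (1 - v) = -((1 - v)⁻¹ * -1) by ring]
      exact this
    exact (hTderiv _).comp v hinner
  -- slope bound from isoperimetry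
  have hslope : ∀ s, 0 < s → s ≤ r → ∀ c, c < (1 - h s) * γ (-Real.log (1 - h s)) →
      ∀ᶠ ε in nhdsWithin (0:ℝ) (Set.Ioi 0), c * ε ≤ h (s + ε) - h s := by
    intro s hs0 hsr c hc
    set B := Metric.thickening s A with hB
    have hBmeas : MeasurableSet B := Metric.isOpen_thickening.measurableSet
    have hhs1 : h s < 1 := lt_of_le_of_lt (hmono hsr) hr1
    have hhsH : 1 / 2 ≤ h s := hhalf s hs0
    have hv' : 1 - h s ∈ Set.Ioc (0:ℝ) (1/2) := ⟨by linarith, by linarith⟩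
    have hIso := hiso B hBmeas (1 - h s) hv' (Or.inr (by
      show (μ (Metric.thickening s A)).toReal = 1 - (1 - h s)
      simp [hhdef]))
    have hlog : Real.log (1 / (1 - h s)) = -Real.log (1 - h s) := by
      rw [one_div, Real.log_inv]
    rw [hlog] at hIso
    have hbdd : ∃ b : ℝ, ∀ᶠ ε in nhdsWithin (0:ℝ) (Set.Ioi 0),
        b ≤ ((μ (Metric.thickening ε B)).toReal - (μ B).toReal) / ε := by
      refine ⟨0, ?_⟩
      filter_upwards [self_mem_nhdsWithin] with ε hε
      have hε0 : (0:ℝ) < ε := hε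
      have : (μ B).toReal ≤ (μ (Metric.thickening ε B)).toReal :=
        ENNReal.toReal_mono (measure_ne_top μ _)
          (measure_mono (Metric.self_subset_thickening hε0 B))
      exact div_nonneg (by linarith) hε0.le
    have hev := extract_liminf hIso hc hbdd
    filter_upwards [hev, self_mem_nhdsWithin] with ε hc' hε
    have hε0 : (0:ℝ) < ε := hε
    have hsub : Metric.thickening ε B ⊆ Metric.thickening (s + ε) A := by
      rw [hB]
      have := Metric.thickening_thickening_subset ε s A
      rwa [add_comm] at this
    have hnum : (μ (Metric.thickening ε B)).toReal ≤ h (s + ε) :=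
      ENNReal.toReal_mono (measure_ne_top μ _) (measure_mono hsub)
    have hBs : (μ B).toReal = h s := by simp [hhdef, hB]
    rw [hBs] at hc'
    have h2 : c ≤ (h (s + ε) - h s) / ε := by
      refine hc'.trans ?_
      exact (div_le_div_iff_of_pos_right hε0).mpr (by linarith [hnum])
    exact (le_div_iff₀ hε0).mp h2
  -- main comparison on [a, r]
  have key : ∀ a, 0 < a → a < r → r - a ≤ Ψ (h r) - Ψ (h a) := by
    intro a ha0 har
    apply dini_mono har.le
    · intro sarg hsarg targ htarg hst
      exact hΨmono (h sarg) (h targ) (h0 sarg) (hmono hst)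
        (lt_of_le_of_lt (hmono htarg.2) hr1)
    · intro s hs c hcIoo
      have hs0 : 0 < s := lt_of_lt_of_le ha0 hs.1
      have hsH : 1 / 2 ≤ h s := hhalf s hs0
      have hs1 : h s < 1 := lt_of_le_of_lt (hmono hs.2.le) hr1
      have h1v : (0:ℝ) < 1 - h s := by linarith
      have hy : Real.log 2 ≤ -Real.log (1 - h s) := hlogb (h s) hsH hs1
      set L : ℝ := (1 - h s) * γ (-Real.log (1 - h s)) with hLdef
      have hLpos : 0 < L := mul_pos h1v (hγpos _ hy)
      set d : ℝ := f0 (-Real.log (1 - h s)) * (1 / (1 - h s)) with hddef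
      have hd : HasDerivAt Ψ d (h s) := hΨderiv (h s) hs1
      have hdL : 1 ≤ d * L := by
        rw [hddef, hLdef, hf0def]
        rw [← hγ'eq _ hy]
        have hg0 : γ' (-Real.log (1 - h s)) ≠ 0 := (hγ'pos _).ne'
        field_simp
        exact le_rfl
      exact dini_step hs.2 hmono hr1 (h0 s) hLpos hd hdL hΨmono hΨs
        (fun c' hc' => hslope s hs0 hs.2.le c' hc') hcIoo
  -- conclude r ≤ Ψ (h r)
  have hgr : r ≤ Ψ (h r) := by
    apply le_of_forall_pos_le_add
    intro ε hε
    set a : ℝ := min ε r / 2 with hadef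
    have ha0 : 0 < a := by
      apply div_pos (lt_min hε hr) two_pos
    have har : a < r := by
      have : a ≤ r / 2 := by
        rw [hadef]; gcongr; exact min_le_right _ _
      linarith
    have haε : a ≤ ε / 2 := by
      rw [hadef]; gcongr; exact min_le_left _ _
    have hk := key a ha0 har
    have ha1 : h a < 1 := lt_of_le_of_lt (hmono har.le) hr1
    have hΨa : 0 ≤ Ψ (h a) := by
      have h1 : T (Real.log 2) ≤ T (-Real.log (1 - h a)) :=
        hTsm.monotone (hlogb (h a) (hhalf a ha0) ha1)
      rw [hT2] at h1
      exact h1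
    linarith
  have hTle : T x ≤ T (-Real.log (1 - h r)) := by
    rw [hTeq]
    exact hTx.trans hgr
  have hxle : x ≤ -Real.log (1 - h r) := hTsm.le_iff_le.mp hTle
  have h3 : (0:ℝ) < 1 - h r := by linarith
  calc 1 - h r = Real.exp (Real.log (1 - h r)) := (Real.exp_log h3).symm
    _ ≤ Real.exp (-x) := Real.exp_le_exp.mpr (by linarith)
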